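/- Fix α > −1 and a nonnegative integer k with −1 < α − 2k < 1, and fix 0 < λ₁ ≤ 1. Let f : (0, ∞) → ℂ be (k+1)-times continuously differentiable, supported in (0, λ₁], and suppose |f^{(j)}(λ)| ≤ M λ^{α−j} for all 0 ≤ j ≤ k+1 and all λ > 0. Then there is a constant C, depending only on α, k and λ₁ (not on f or t), such that for all real t ≠ 0: | ∫₀^∞ e^{i t λ²} f(λ) dλ | ≤ C M |t|^{−(α+1)/2}. -/

import Mathlib

open MeasureTheory Complex Real

noncomputable def cc : ℕ → ℕ → ℝ
  | 0, 0 => 1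
  | 0, _+1 => 0
  | j+1, 0 => cc j 0 * (0 - 2*(j:ℝ) - 1)
  | j+1, i+1 => cc j (i+1) * (((i:ℝ)+1) - 2*(j:ℝ) - 1) + cc j i

lemma cc_zero_of_lt : ∀ j i, j < i → cc j i = 0 := by
  intro j
  induction j with
  | zero => intro i hi; match i, hi with
      | i+1, _ => rfl
  | succ j ih =>
      intro i hi
      match i, hi with
      | i+1, hi =>
        have h1 : cc j (i+1) = 0 := ih _ (by omega)
        have h2 : cc j i = 0 := ih _ (by omega)
        show cc j (i+1) * _ + cc j i = 0
        rw [h1, h2]; ring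

noncomputable def G (f : ℝ → ℂ) (t : ℝ) (j : ℕ) (x : ℝ) : ℂ :=
  ((2*Complex.I*(t:ℂ))⁻¹)^j * ∑ i ∈ Finset.range (j+1),
    (cc j i : ℂ) * (x:ℂ)^((i:ℤ) - 2*j) * iteratedDerivWithin i f (Set.Ioi 0) x

lemma G_zero (f : ℝ → ℂ) (t : ℝ) (x : ℝ) : G f t 0 x = f x := by
  simp [G, cc]

lemma iteratedDerivWithin_eq_zero_of_gt (f : ℝ → ℂ) (lam1 : ℝ) (hl0 : 0 < lam1)
    (hsupp : ∀ lam : ℝ, lam ∉ Set.Ioc (0:ℝ) lam1 → f lam = 0)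
    (i : ℕ) (x : ℝ) (hx : lam1 < x) :
    iteratedDerivWithin i f (Set.Ioi 0) x = 0 := by
  have hev : f =ᶠ[nhdsWithin x (Set.Ioi 0)] (fun _ => 0) := by
    filter_upwards [nhdsWithin_le_nhds (Ioi_mem_nhds hx)] with y hy
    exact hsupp y (fun h => absurd h.2 (not_le.2 hy))
  have hfx : f x = 0 := hsupp x (fun h => absurd h.2 (not_le.2 hx))
  have := hev.iteratedFDerivWithin_eq (𝕜 := ℝ) hfx (n := i)
  rw [iteratedDerivWithin, this, iteratedFDerivWithin_zero_fun]
  · simp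

lemma G_eq_zero_of_gt (f : ℝ → ℂ) (t : ℝ) (lam1 : ℝ) (hl0 : 0 < lam1)
    (hsupp : ∀ lam : ℝ, lam ∉ Set.Ioc (0:ℝ) lam1 → f lam = 0)
    (j : ℕ) (x : ℝ) (hx : lam1 < x) : G f t j x = 0 := by
  unfold G
  rw [Finset.sum_eq_zero, mul_zero]
  intro i _
  rw [iteratedDerivWithin_eq_zero_of_gt f lam1 hl0 hsupp i x hx, mul_zero]

lemma norm_inv_two_I_t (t : ℝ) : ‖((2*Complex.I*(t:ℂ))⁻¹)‖ = (2*|t|)⁻¹ := by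
  rw [norm_inv]
  congr 1
  simp [map_mul]

lemma G_bound (α M : ℝ) (f : ℝ → ℂ) (t : ℝ) (ht : t ≠ 0) (j : ℕ)
    (hder : ∀ i, i ≤ j → ∀ lam : ℝ, 0 < lam →
      ‖iteratedDerivWithin i f (Set.Ioi 0) lam‖ ≤ M * lam ^ (α - (i:ℝ)))
    (x : ℝ) (hx : 0 < x) :
    ‖G f t j x‖ ≤ (∑ i ∈ Finset.range (j+1), |cc j i|) * M * |t| ^ (-(j:ℝ)) * x ^ (α - 2*j) := by
  have hM : 0 ≤ M := by
    have := hder 0 (Nat.zero_le _) 1 one_pos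
    simpa using le_trans (norm_nonneg _) this
  have ht' : 0 < |t| := abs_pos.2 ht
  have hterm : ∀ i ∈ Finset.range (j+1),
      ‖(cc j i : ℂ) * (x:ℂ)^((i:ℤ) - 2*j) * iteratedDerivWithin i f (Set.Ioi 0) x‖
        ≤ |cc j i| * (M * x ^ (α - 2*(j:ℝ))) := by
    intro i hi
    rw [norm_mul, norm_mul]
    have h1 : ‖(cc j i : ℂ)‖ = |cc j i| := by simp
    have h2 : ‖(x:ℂ)^((i:ℤ) - 2*(j:ℤ))‖ = x ^ (((i:ℝ)) - 2*j) := by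
      rw [norm_zpow]
      have hxc : ‖(x:ℂ)‖ = x := by
        simp [abs_of_pos hx]
      rw [hxc, ← Real.rpow_intCast]
      push_cast
      ring_nf
    have h3 := hder i (Nat.lt_succ_iff.mp (Finset.mem_range.mp hi)) x hx
    calc ‖(cc j i : ℂ)‖ * ‖(x:ℂ)^((i:ℤ) - 2*(j:ℤ))‖ * ‖iteratedDerivWithin i f (Set.Ioi 0) x‖
        ≤ |cc j i| * x ^ (((i:ℝ)) - 2*j) * (M * x ^ (α - (i:ℝ))) := by
          rw [h1, h2]
          exact mul_le_mul_of_nonneg_left h3 (by positivity)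
      _ = |cc j i| * (M * (x ^ (((i:ℝ)) - 2*j) * x ^ (α - (i:ℝ)))) := by ring
      _ = |cc j i| * (M * x ^ (α - 2*(j:ℝ))) := by
          rw [← Real.rpow_add hx]; ring_nf
  have hsum : ‖∑ i ∈ Finset.range (j+1),
      (cc j i : ℂ) * (x:ℂ)^((i:ℤ) - 2*j) * iteratedDerivWithin i f (Set.Ioi 0) x‖
        ≤ (∑ i ∈ Finset.range (j+1), |cc j i|) * (M * x ^ (α - 2*(j:ℝ))) := by
    rw [Finset.sum_mul]
    exact norm_sum_le_of_le _ hterm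
  have hpow : ‖((2*Complex.I*(t:ℂ))⁻¹)^j‖ ≤ |t| ^ (-(j:ℝ)) := by
    rw [norm_pow, norm_inv_two_I_t, Real.rpow_neg (abs_nonneg t), Real.rpow_natCast, ← inv_pow]
    apply pow_le_pow_left₀ (by positivity)
    exact inv_anti₀ ht' (by linarith [abs_nonneg t])
  calc ‖G f t j x‖ = ‖((2*Complex.I*(t:ℂ))⁻¹)^j‖ * ‖∑ i ∈ Finset.range (j+1),
        (cc j i : ℂ) * (x:ℂ)^((i:ℤ) - 2*j) * iteratedDerivWithin i f (Set.Ioi 0) x‖ := by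
        rw [G, norm_mul]
    _ ≤ |t| ^ (-(j:ℝ)) * ((∑ i ∈ Finset.range (j+1), |cc j i|) * (M * x ^ (α - 2*(j:ℝ)))) := by
        apply mul_le_mul hpow hsum (norm_nonneg _) (by positivity)
    _ = (∑ i ∈ Finset.range (j+1), |cc j i|) * M * |t| ^ (-(j:ℝ)) * x ^ (α - 2*j) := by ring

lemma sum_identity (j : ℕ) (x : ℂ) (F : ℕ → ℂ) :
    ∑ i ∈ Finset.range (j+2), (cc (j+1) i : ℂ) * x^((i:ℤ) - 2*((j:ℤ)+1)) * F i =
    ∑ i ∈ Finset.range (j+1), (cc j i : ℂ) *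
      (((i:ℂ) - 2*(j:ℂ) - 1) * x^((i:ℤ) - 2*(j:ℤ) - 2) * F i
        + x^((i:ℤ) - 2*(j:ℤ) - 1) * F (i+1)) := by
  rw [Finset.sum_range_succ']
  have hL : ∀ i : ℕ, (cc (j+1) (i+1) : ℂ) * x^(((i+1:ℕ):ℤ) - 2*((j:ℤ)+1)) * F (i+1)
      = (cc j (i+1) : ℂ) * (((i:ℂ)+1) - 2*(j:ℂ) - 1) * x^((i:ℤ) - 2*(j:ℤ) - 1) * F (i+1)
        + (cc j i : ℂ) * x^((i:ℤ) - 2*(j:ℤ) - 1) * F (i+1) := by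
    intro i
    have he : ((i+1:ℕ):ℤ) - 2*((j:ℤ)+1) = (i:ℤ) - 2*(j:ℤ) - 1 := by push_cast; ring
    rw [he]
    show ((cc j (i+1) * (((i:ℝ)+1) - 2*(j:ℝ) - 1) + cc j i : ℝ) : ℂ) * _ * _ = _
    push_cast
    ring
  rw [Finset.sum_congr rfl (fun i _ => hL i)]
  rw [Finset.sum_add_distrib]
  -- now handle RHS
  rw [show ∑ i ∈ Finset.range (j+1), (cc j i : ℂ) *
      (((i:ℂ) - 2*(j:ℂ) - 1) * x^((i:ℤ) - 2*(j:ℤ) - 2) * F i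
        + x^((i:ℤ) - 2*(j:ℤ) - 1) * F (i+1))
      = ∑ i ∈ Finset.range (j+1), ((cc j i : ℂ) * (((i:ℂ) - 2*(j:ℂ) - 1) * x^((i:ℤ) - 2*(j:ℤ) - 2) * F i)
        + (cc j i : ℂ) * (x^((i:ℤ) - 2*(j:ℤ) - 1) * F (i+1))) from
      Finset.sum_congr rfl (fun i _ => by ring)]
  rw [Finset.sum_add_distrib]
  have hB : (∑ i ∈ Finset.range (j+1), (cc j i : ℂ) * x^((i:ℤ) - 2*(j:ℤ) - 1) * F (i+1))
      = ∑ i ∈ Finset.range (j+1), (cc j i : ℂ) * (x^((i:ℤ) - 2*(j:ℤ) - 1) * F (i+1)) :=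
    Finset.sum_congr rfl (fun i _ => by ring)
  have hA : (∑ i ∈ Finset.range (j+1), (cc j (i+1) : ℂ) * ((i:ℂ) + 1 - 2*(j:ℂ) - 1) * x^((i:ℤ) - 2*(j:ℤ) - 1) * F (i+1))
      + (cc (j+1) 0 : ℂ) * x^(((0:ℕ):ℤ) - 2*((j:ℤ)+1)) * F 0
      = ∑ i ∈ Finset.range (j+1), (cc j i : ℂ) * (((i:ℂ) - 2*(j:ℂ) - 1) * x^((i:ℤ) - 2*(j:ℤ) - 2) * F i) := by
    rw [Finset.sum_range_succ, cc_zero_of_lt j (j+1) (Nat.lt_succ_self j)]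
    push_cast
    rw [zero_mul, zero_mul, zero_mul, add_zero]
    rw [Finset.sum_range_succ']
    congr 1
    · apply Finset.sum_congr rfl
      intro i _
      have he : ((i+1:ℕ):ℤ) - 2*(j:ℤ) - 2 = (i:ℤ) - 2*(j:ℤ) - 1 := by push_cast; ring
      rw [he]
      push_cast
      ring
    · have he : (0:ℤ) - 2*((j:ℤ)+1) = ((0:ℕ):ℤ) - 2*(j:ℤ) - 2 := by push_cast; ring
      rw [he]
      show ((cc j 0 * (0 - 2*(j:ℝ) - 1) : ℝ) : ℂ) * _ * _ = _
      push_cast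
      ring
  linear_combination hA + hB

lemma F_hasDerivAt (k : ℕ) (f : ℝ → ℂ) (hf : ContDiffOn ℝ (k+1) f (Set.Ioi 0))
    (i : ℕ) (hi : i ≤ k) (x : ℝ) (hx : 0 < x) :
    HasDerivAt (iteratedDerivWithin i f (Set.Ioi 0))
      (iteratedDerivWithin (i+1) f (Set.Ioi 0) x) x := by
  have hd : DifferentiableOn ℝ (iteratedDerivWithin i f (Set.Ioi 0)) (Set.Ioi 0) :=
    hf.differentiableOn_iteratedDerivWithin (by exact_mod_cast Nat.lt_succ_of_le hi)
      (uniqueDiffOn_Ioi 0)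
  have hda : DifferentiableAt ℝ (iteratedDerivWithin i f (Set.Ioi 0)) x :=
    (hd x hx).differentiableAt (Ioi_mem_nhds hx)
  have h := hda.hasDerivAt
  rwa [show deriv (iteratedDerivWithin i f (Set.Ioi 0)) x
      = iteratedDerivWithin (i+1) f (Set.Ioi 0) x by
    rw [iteratedDerivWithin_succ,
      derivWithin_of_isOpen isOpen_Ioi hx]] at h

lemma G_hasDerivAt (k : ℕ) (f : ℝ → ℂ) (hf : ContDiffOn ℝ (k+1) f (Set.Ioi 0))
    (t : ℝ) (ht : t ≠ 0) (j : ℕ) (hj : j ≤ k) (x : ℝ) (hx : 0 < x) :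
    HasDerivAt (fun y : ℝ => G f t j y * (2*Complex.I*(t:ℂ)*(y:ℂ))⁻¹) (G f t (j+1) x) x := by
  set F : ℕ → ℝ → ℂ := fun i => iteratedDerivWithin i f (Set.Ioi 0) with hF
  have hxc : (x:ℂ) ≠ 0 := by exact_mod_cast hx.ne'
  -- the rewritten function
  have key : HasDerivAt (fun y : ℝ => ((2*Complex.I*(t:ℂ))⁻¹)^(j+1) *
      ∑ i ∈ Finset.range (j+1), (cc j i : ℂ) * (y:ℂ)^((i:ℤ) - 2*(j:ℤ) - 1) * F i y)
      (G f t (j+1) x) x := by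
    have hterm : ∀ i ∈ Finset.range (j+1),
        HasDerivAt (fun y : ℝ => (cc j i : ℂ) * (y:ℂ)^((i:ℤ) - 2*(j:ℤ) - 1) * F i y)
          ((cc j i : ℂ) * ((((i:ℤ) - 2*(j:ℤ) - 1 : ℤ) : ℂ) * (x:ℂ)^((i:ℤ) - 2*(j:ℤ) - 2) * F i x
            + (x:ℂ)^((i:ℤ) - 2*(j:ℤ) - 1) * F (i+1) x)) x := by
      intro i hi
      have h1 : HasDerivAt (fun y : ℝ => (y:ℂ)^((i:ℤ) - 2*(j:ℤ) - 1))
          ((((i:ℤ) - 2*(j:ℤ) - 1 : ℤ) : ℂ) * (x:ℂ)^((i:ℤ) - 2*(j:ℤ) - 2)) x := by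
        have := (hasDerivAt_zpow ((i:ℤ) - 2*(j:ℤ) - 1) (x:ℂ) (Or.inl hxc)).comp_ofReal
        rwa [show (i:ℤ) - 2*(j:ℤ) - 1 - 1 = (i:ℤ) - 2*(j:ℤ) - 2 by ring] at this
      have h2 : HasDerivAt (F i) (F (i+1) x) x :=
        F_hasDerivAt k f hf i (le_trans (Nat.lt_succ_iff.mp (Finset.mem_range.mp hi)) hj) x hx
      have h3 := (h1.mul h2).const_mul (cc j i : ℂ)
      have heq : (fun y : ℝ => (cc j i : ℂ) * ((y:ℂ)^((i:ℤ) - 2*(j:ℤ) - 1) * F i y))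
          = (fun y : ℝ => (cc j i : ℂ) * (y:ℂ)^((i:ℤ) - 2*(j:ℤ) - 1) * F i y) :=
        funext fun y => (mul_assoc _ _ _).symm
      simp only [Pi.mul_apply] at h3
      rwa [heq] at h3
    have hsum := HasDerivAt.fun_sum hterm
    have := hsum.const_mul (((2*Complex.I*(t:ℂ))⁻¹)^(j+1))
    convert this using 1
    · rfl
    -- G f t (j+1) x equals the derivative sum
    rw [G]
    rw [show ∑ i ∈ Finset.range (j+1+1), (cc (j+1) i : ℂ) * (x:ℂ)^((i:ℤ) - 2*((j:ℕ)+1:ℕ)) *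
          iteratedDerivWithin i f (Set.Ioi 0) x
        = ∑ i ∈ Finset.range (j+2), (cc (j+1) i : ℂ) * (x:ℂ)^((i:ℤ) - 2*((j:ℤ)+1)) * F i x from
      Finset.sum_congr rfl (fun i _ => by norm_cast)]
    rw [sum_identity j (x:ℂ) (fun i => F i x)]
    congr 1
    apply Finset.sum_congr rfl
    intro i _
    push_cast
    ring
  apply key.congr_of_eventuallyEq
  filter_upwards [Ioi_mem_nhds hx] with y hy
  have hyc : (y:ℂ) ≠ 0 := by exact_mod_cast (ne_of_gt hy)
  have hs : ∑ i ∈ Finset.range (j+1), (cc j i : ℂ) * (y:ℂ)^((i:ℤ) - 2*(j:ℤ) - 1) * F i y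
      = (∑ i ∈ Finset.range (j+1), (cc j i : ℂ) * (y:ℂ)^((i:ℤ) - 2*(j:ℤ)) * F i y) * (y:ℂ)⁻¹ := by
    rw [Finset.sum_mul]
    apply Finset.sum_congr rfl
    intro i _
    rw [show ((i:ℤ) - 2*(j:ℤ) - 1) = ((i:ℤ) - 2*(j:ℤ)) - 1 from rfl, zpow_sub_one₀ hyc]
    ring
  rw [G, mul_inv, pow_succ, hs]
  ring

lemma expE_hasDerivAt (t : ℝ) (x : ℝ) :
    HasDerivAt (fun y : ℝ => Complex.exp (Complex.I*(t:ℂ)*(y:ℂ)^2))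
      (2*Complex.I*(t:ℂ)*(x:ℂ) * Complex.exp (Complex.I*(t:ℂ)*(x:ℂ)^2)) x := by
  have h1 : HasDerivAt (fun y : ℝ => Complex.I*(t:ℂ)*(y:ℂ)^2)
      (Complex.I*(t:ℂ)*(2*(x:ℂ))) x := by
    have := ((hasDerivAt_pow 2 ((x:ℝ):ℂ)).const_mul (Complex.I*(t:ℂ))).comp_ofReal
    simpa using this
  have := h1.cexp
  convert this using 1
  ring

lemma expE_norm (t : ℝ) (y : ℝ) : ‖Complex.exp (Complex.I*(t:ℂ)*(y:ℂ)^2)‖ = 1 := by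
  rw [Complex.norm_exp]
  have : (Complex.I*(t:ℂ)*(y:ℂ)^2).re = 0 := by
    rw [show Complex.I*(t:ℂ)*(y:ℂ)^2 = Complex.I * ((t*y^2 : ℝ):ℂ) by push_cast; ring]
    simp [← Complex.ofReal_pow]
  rw [this, Real.exp_zero]

lemma expE_continuous (t : ℝ) :
    Continuous (fun y : ℝ => Complex.exp (Complex.I*(t:ℂ)*(y:ℂ)^2)) := by
  apply Complex.continuous_exp.comp
  continuity

lemma G_continuousOn (k : ℕ) (f : ℝ → ℂ) (hf : ContDiffOn ℝ (k+1) f (Set.Ioi 0))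
    (t : ℝ) (j : ℕ) (hj : j ≤ k+1) : ContinuousOn (G f t j) (Set.Ioi 0) := by
  apply ContinuousOn.mul continuousOn_const
  apply continuousOn_finset_sum
  intro i hi
  apply ContinuousOn.mul (ContinuousOn.mul continuousOn_const ?_) ?_
  · intro y hy
    have hyc : (y:ℂ) ≠ 0 := by exact_mod_cast (ne_of_gt (Set.mem_Ioi.mp hy))
    exact ((continuousAt_zpow₀ _ _ (Or.inl hyc)).comp
      Complex.continuous_ofReal.continuousAt).continuousWithinAt
  · exact hf.continuousOn_iteratedDerivWithin
      (by exact_mod_cast Nat.le_trans (Nat.lt_succ_iff.mp (Finset.mem_range.mp hi)) hj)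
      (uniqueDiffOn_Ioi 0)

lemma ibp_step (k : ℕ) (f : ℝ → ℂ) (hf : ContDiffOn ℝ (k+1) f (Set.Ioi 0))
    (lam1 : ℝ) (hl0 : 0 < lam1)
    (hsupp : ∀ lam : ℝ, lam ∉ Set.Ioc (0:ℝ) lam1 → f lam = 0)
    (t : ℝ) (ht : t ≠ 0) (j : ℕ) (hj : j ≤ k) (a : ℝ) (ha : 0 < a) (hab : a ≤ lam1 + 1) :
    ∫ x in a..(lam1+1), Complex.exp (Complex.I*(t:ℂ)*(x:ℂ)^2) * G f t j x
      = -(G f t j a * (2*Complex.I*(t:ℂ)*(a:ℂ))⁻¹ * Complex.exp (Complex.I*(t:ℂ)*(a:ℂ)^2))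
        - ∫ x in a..(lam1+1), Complex.exp (Complex.I*(t:ℂ)*(x:ℂ)^2) * G f t (j+1) x := by
  set b := lam1 + 1 with hb
  have hmem : ∀ x ∈ Set.uIcc a b, 0 < x := by
    intro x hx
    rw [Set.uIcc_of_le hab] at hx
    exact lt_of_lt_of_le ha hx.1
  have hu : ∀ x ∈ Set.uIcc a b,
      HasDerivAt (fun y : ℝ => G f t j y * (2*Complex.I*(t:ℂ)*(y:ℂ))⁻¹) (G f t (j+1) x) x :=
    fun x hx => G_hasDerivAt k f hf t ht j hj x (hmem x hx)
  have hv : ∀ x ∈ Set.uIcc a b,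
      HasDerivAt (fun y : ℝ => Complex.exp (Complex.I*(t:ℂ)*(y:ℂ)^2))
        (2*Complex.I*(t:ℂ)*(x:ℂ) * Complex.exp (Complex.I*(t:ℂ)*(x:ℂ)^2)) x :=
    fun x _ => expE_hasDerivAt t x
  have huIcc : Set.uIcc a b ⊆ Set.Ioi 0 := fun x hx => hmem x hx
  have hu' : IntervalIntegrable (G f t (j+1)) volume a b :=
    ((G_continuousOn k f hf t (j+1) (by omega)).mono huIcc).intervalIntegrable
  have hv' : IntervalIntegrable
      (fun x : ℝ => 2*Complex.I*(t:ℂ)*(x:ℂ) * Complex.exp (Complex.I*(t:ℂ)*(x:ℂ)^2))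
      volume a b :=
    (Continuous.mul (by continuity) (expE_continuous t)).intervalIntegrable a b
  have hibp := intervalIntegral.integral_mul_deriv_eq_deriv_mul hu hv hu' hv'
  have hgb : G f t j b = 0 := G_eq_zero_of_gt f t lam1 hl0 hsupp j b (by rw [hb]; linarith)
  rw [hgb, zero_mul, zero_mul, zero_sub] at hibp
  have hL : ∫ x in a..b, (G f t j x * (2*Complex.I*(t:ℂ)*(x:ℂ))⁻¹) *
        (2*Complex.I*(t:ℂ)*(x:ℂ) * Complex.exp (Complex.I*(t:ℂ)*(x:ℂ)^2))
      = ∫ x in a..b, Complex.exp (Complex.I*(t:ℂ)*(x:ℂ)^2) * G f t j x := by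
    apply intervalIntegral.integral_congr
    intro x hx
    have hx0 : (2*Complex.I*(t:ℂ)*(x:ℂ)) ≠ 0 := by
      apply mul_ne_zero
      apply mul_ne_zero
      · exact mul_ne_zero two_ne_zero Complex.I_ne_zero
      · exact_mod_cast ht
      · exact_mod_cast (ne_of_gt (hmem x hx))
    dsimp only
    rw [← mul_assoc, inv_mul_cancel_right₀ hx0, mul_comm]
  have hR : ∫ x in a..b, G f t (j+1) x * Complex.exp (Complex.I*(t:ℂ)*(x:ℂ)^2)
      = ∫ x in a..b, Complex.exp (Complex.I*(t:ℂ)*(x:ℂ)^2) * G f t (j+1) x := by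
    apply intervalIntegral.integral_congr
    intro x _
    exact mul_comm _ _
  rw [hL, hR] at hibp
  rw [hibp]

lemma ibp_iter (k : ℕ) (f : ℝ → ℂ) (hf : ContDiffOn ℝ (k+1) f (Set.Ioi 0))
    (lam1 : ℝ) (hl0 : 0 < lam1)
    (hsupp : ∀ lam : ℝ, lam ∉ Set.Ioc (0:ℝ) lam1 → f lam = 0)
    (t : ℝ) (ht : t ≠ 0) (a : ℝ) (ha : 0 < a) (hab : a ≤ lam1 + 1) :
    ∀ n, n ≤ k+1 →
    ‖∫ x in a..(lam1+1), Complex.exp (Complex.I*(t:ℂ)*(x:ℂ)^2) * G f t 0 x‖ ≤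
      (∑ j ∈ Finset.range n, ‖G f t j a‖ * ‖(2*Complex.I*(t:ℂ)*(a:ℂ))⁻¹‖)
      + ‖∫ x in a..(lam1+1), Complex.exp (Complex.I*(t:ℂ)*(x:ℂ)^2) * G f t n x‖ := by
  intro n
  induction n with
  | zero => intro _; simp
  | succ n ih =>
      intro hn
      refine le_trans (ih (by omega)) ?_
      rw [Finset.sum_range_succ]
      have hstep := ibp_step k f hf lam1 hl0 hsupp t ht n (by omega) a ha hab
      rw [hstep]
      have : ‖-(G f t n a * (2*Complex.I*(t:ℂ)*(a:ℂ))⁻¹ * Complex.exp (Complex.I*(t:ℂ)*(a:ℂ)^2))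
          - ∫ x in a..(lam1+1), Complex.exp (Complex.I*(t:ℂ)*(x:ℂ)^2) * G f t (n+1) x‖
          ≤ ‖G f t n a‖ * ‖(2*Complex.I*(t:ℂ)*(a:ℂ))⁻¹‖
            + ‖∫ x in a..(lam1+1), Complex.exp (Complex.I*(t:ℂ)*(x:ℂ)^2) * G f t (n+1) x‖ := by
        refine le_trans (norm_sub_le _ _) ?_
        rw [norm_neg, norm_mul, norm_mul, expE_norm, mul_one]
      linarith


/-- Lemma 6.3 of the paper: if `f` is supported in `(0, λ₁]`, is `(k+1)`-times
continuously differentiable on `(0,∞)` with `|f^{(j)}(λ)| ≤ M λ^{α−j}` for `0 ≤ j ≤ k+1`,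
where `−1 < α` and `−1 < α − 2k < 1`, then `|∫₀^∞ e^{itλ²} f(λ) dλ| ≤ C M |t|^{−(α+1)/2}`
with `C` depending only on `α`, `k` and `λ₁`. -/
theorem oscillatory_integral_fractional_bound (α : ℝ) (k : ℕ) (hα : -1 < α)
    (hαk1 : -1 < α - 2 * (k : ℝ)) (hαk2 : α - 2 * (k : ℝ) < 1)
    (lam1 : ℝ) (hl0 : 0 < lam1) (hl1 : lam1 ≤ 1) :
    ∃ C : ℝ, 0 < C ∧ ∀ (f : ℝ → ℂ) (M : ℝ),
      ContDiffOn ℝ (k + 1) f (Set.Ioi (0 : ℝ)) →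
      (∀ lam : ℝ, lam ∉ Set.Ioc (0 : ℝ) lam1 → f lam = 0) →
      (∀ j : ℕ, j ≤ k + 1 → ∀ lam : ℝ, 0 < lam →
        ‖iteratedDerivWithin j f (Set.Ioi (0 : ℝ)) lam‖ ≤ M * lam ^ (α - (j : ℝ))) →
      ∀ t : ℝ, t ≠ 0 →
        ‖∫ lam in Set.Ioi (0 : ℝ), Complex.exp (Complex.I * (t : ℂ) * (lam : ℂ) ^ 2) * f lam‖ ≤
          C * M * |t| ^ (-((α + 1) / 2)) := by
  set Dsum : ℕ → ℝ := fun j => ∑ i ∈ Finset.range (j+1), |cc j i| with hDsum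
  have hDnonneg : ∀ j, 0 ≤ Dsum j := fun j =>
    Finset.sum_nonneg fun i _ => abs_nonneg _
  have hden : 0 < 2*(k:ℝ)+1-α := by linarith
  set C : ℝ := 1/(α+1) + (∑ j ∈ Finset.range (k+1), Dsum j) + Dsum (k+1) / (2*(k:ℝ)+1-α) + 1
    with hC
  have hCpos : 0 < C := by
    have h1 : 0 < 1/(α+1) := by
      have : 0 < α + 1 := by linarith
      positivity
    have h2 : 0 ≤ ∑ j ∈ Finset.range (k+1), Dsum j :=
      Finset.sum_nonneg fun j _ => hDnonneg j
    have h3 : 0 ≤ Dsum (k+1) / (2*(k:ℝ)+1-α) := by positivity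
    rw [hC]; linarith
  refine ⟨C, hCpos, ?_⟩
  intro f M hf hsupp hder t ht
  have hM : 0 ≤ M := by
    have := hder 0 (by omega) 1 one_pos
    simpa using le_trans (norm_nonneg _) this
  set T := |t| with hTdef
  have hT : 0 < T := abs_pos.2 ht
  set δ : ℝ := T ^ (-(1/2) : ℝ) with hδdef
  have hδ : 0 < δ := Real.rpow_pos_of_pos hT _
  set X : ℝ := T ^ (-((α+1)/2)) with hXdef
  have hX : 0 < X := Real.rpow_pos_of_pos hT _
  set E : ℝ → ℂ := fun x => Complex.exp (Complex.I*(t:ℂ)*(x:ℂ)^2) with hE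
  set b : ℝ := lam1 + 1 with hb
  have hb1 : lam1 < b := by rw [hb]; linarith
  have hb0 : 0 < b := by linarith
  -- rpow identities
  have hTd : ∀ c : ℝ, δ ^ c = T ^ (-(1/2) * c) := fun c => (Real.rpow_mul hT.le _ c).symm
  have hδX : δ ^ (α+1) = X := by
    rw [hTd, hXdef]; congr 1; ring
  -- measurability / integrability
  have hfc : ContinuousOn f (Set.Ioi (0:ℝ)) := hf.continuousOn
  have hEfc : ContinuousOn (fun x => E x * f x) (Set.Ioi (0:ℝ)) :=
    ((expE_continuous t).continuousOn).mul hfc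
  have hMrpow : ∀ c : ℝ, 0 < c → IntegrableOn (fun x => M * x ^ α) (Set.Ioc 0 c) := by
    intro c hc
    have h1 : IntervalIntegrable (fun x : ℝ => x ^ α) volume 0 c :=
      intervalIntegral.intervalIntegrable_rpow' hα
    rw [intervalIntegrable_iff_integrableOn_Ioc_of_le hc.le] at h1
    exact h1.const_mul M
  have hIoc : ∀ c : ℝ, 0 < c → IntegrableOn (fun x => E x * f x) (Set.Ioc 0 c) := by
    intro c hc
    apply Integrable.mono' (hMrpow c hc)
    · exact (hEfc.mono Set.Ioc_subset_Ioi_self).aestronglyMeasurable measurableSet_Ioc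
    · rw [ae_restrict_iff' measurableSet_Ioc]
      filter_upwards with x hx
      rw [hE]
      simp only [norm_mul]
      rw [expE_norm, one_mul]
      simpa using hder 0 (by omega) x hx.1
  have hIoiB : IntegrableOn (fun x => E x * f x) (Set.Ioi b) := by
    apply (integrableOn_zero (μ := volume)).congr_fun ?_ measurableSet_Ioi
    intro x hx
    have : f x = 0 := hsupp x (fun h => absurd h.2 (by push_neg; linarith [Set.mem_Ioi.mp hx]))
    simp [this]
  have hIoi : IntegrableOn (fun x => E x * f x) (Set.Ioi 0) := by
    rw [← Set.Ioc_union_Ioi_eq_Ioi hb0.le]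
    exact (hIoc b hb0).union hIoiB
  -- splitting
  have hsplit : ∀ a : ℝ, 0 < a → ∫ x in Set.Ioi (0:ℝ), E x * f x
      = (∫ x in Set.Ioc 0 a, E x * f x) + ∫ x in Set.Ioi a, E x * f x := by
    intro a ha
    rw [← MeasureTheory.setIntegral_union (Set.Ioc_disjoint_Ioi le_rfl) measurableSet_Ioi
      (hIoi.mono_set (fun x hx => hx.1))
      (hIoi.mono_set (fun x hx => lt_trans ha (Set.mem_Ioi.mp hx))),
      Set.Ioc_union_Ioi_eq_Ioi ha.le]
  -- near-zero bound
  have hnear : ∀ a : ℝ, 0 < a → ‖∫ x in Set.Ioc (0:ℝ) a, E x * f x‖ ≤ M * a^(α+1) / (α+1) := by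
    intro a ha
    refine le_trans (norm_integral_le_integral_norm _) ?_
    have h1 : ∫ x in Set.Ioc (0:ℝ) a, ‖E x * f x‖ ≤ ∫ x in Set.Ioc (0:ℝ) a, M * x ^ α := by
      apply setIntegral_mono_on ((hIoc a ha).norm) (hMrpow a ha) measurableSet_Ioc
      intro x hx
      rw [hE]
      simp only [norm_mul]
      rw [expE_norm, one_mul]
      simpa using hder 0 (by omega) x hx.1
    refine le_trans h1 ?_
    rw [← intervalIntegral.integral_of_le ha.le, intervalIntegral.integral_const_mul,
      integral_rpow (Or.inl hα), Real.zero_rpow (by linarith : α + 1 ≠ 0)]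
    rw [sub_zero]
    rw [mul_div_assoc]
  -- exponent identity for boundary terms
  have hbd : ∀ j : ℕ, T ^ (-(j:ℝ)) * δ ^ (α - 2*(j:ℝ)) * (T*δ)⁻¹ = X := by
    intro j
    rw [mul_inv, ← Real.rpow_neg_one T, ← Real.rpow_neg_one δ, hTd, hTd,
      ← Real.rpow_add hT, ← Real.rpow_add hT, ← Real.rpow_add hT]
    congr 1
    ring
  have hC1 : 1/(α+1) ≤ C := by
    have h2 : 0 ≤ ∑ j ∈ Finset.range (k+1), Dsum j :=
      Finset.sum_nonneg fun j _ => hDnonneg j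
    have h3 : 0 ≤ Dsum (k+1) / (2*(k:ℝ)+1-α) := by positivity
    rw [hC]; linarith
  show ‖∫ x in Set.Ioi (0:ℝ), E x * f x‖ ≤ C * M * X
  rcases le_or_gt lam1 δ with hcase | hcase
  · -- |t| small: trivial bound
    rw [hsplit lam1 hl0]
    have h2 : ∫ x in Set.Ioi lam1, E x * f x = 0 :=
      setIntegral_eq_zero_of_forall_eq_zero (fun x hx => by
        rw [hsupp x (fun h => absurd h.2 (not_le.2 (Set.mem_Ioi.mp hx))), mul_zero])
    rw [h2, add_zero]
    refine le_trans (hnear lam1 hl0) ?_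
    have hmono : lam1 ^ (α+1) ≤ δ ^ (α+1) := Real.rpow_le_rpow hl0.le hcase (by linarith)
    have hstep : M * lam1^(α+1)/(α+1) ≤ 1/(α+1) * M * X := by
      rw [← hδX]
      rw [show 1/(α+1) * M * δ^(α+1) = M * δ^(α+1) / (α+1) by ring]
      gcongr
      linarith
    refine le_trans hstep ?_
    have := mul_le_mul_of_nonneg_right hC1 (mul_nonneg hM hX.le)
    calc 1/(α+1) * M * X = 1/(α+1) * (M * X) := by ring
      _ ≤ C * (M * X) := this
      _ = C * M * X := by ring
  · -- |t| large: integration by parts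
    rw [hsplit δ hδ]
    have hnear2 : ‖∫ x in Set.Ioc (0:ℝ) δ, E x * f x‖ ≤ 1/(α+1) * M * X := by
      refine le_trans (hnear δ hδ) ?_
      rw [← hδX]; ring_nf; rfl
    have hδb : δ ≤ b := by linarith
    have hIoiδ : ∫ x in Set.Ioi δ, E x * f x
        = (∫ x in Set.Ioc δ b, E x * f x) + ∫ x in Set.Ioi b, E x * f x := by
      rw [← MeasureTheory.setIntegral_union (Set.Ioc_disjoint_Ioi le_rfl) measurableSet_Ioi
        (hIoi.mono_set (fun x hx => lt_trans hδ hx.1))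
        (hIoi.mono_set (fun x hx => lt_trans hb0 (Set.mem_Ioi.mp hx))),
        Set.Ioc_union_Ioi_eq_Ioi hδb]
    have hIoib0 : ∫ x in Set.Ioi b, E x * f x = 0 :=
      setIntegral_eq_zero_of_forall_eq_zero (fun x hx => by
        rw [hsupp x (fun h => absurd h.2 (not_le.2 (by linarith [Set.mem_Ioi.mp hx]))),
          mul_zero])
    have hIocInterval : ∫ x in Set.Ioc δ b, E x * f x
        = ∫ x in δ..b, E x * G f t 0 x := by
      rw [intervalIntegral.integral_of_le hδb]
      apply setIntegral_congr_fun measurableSet_Ioc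
      intro x _
      show E x * f x = E x * G f t 0 x
      rw [G_zero]
    rw [hIoiδ, hIoib0, add_zero, hIocInterval]
    have hiter := ibp_iter k f hf lam1 hl0 hsupp t ht δ hδ (by linarith) (k+1) le_rfl
    -- boundary terms
    have hinv : ‖(2*Complex.I*(t:ℂ)*(δ:ℂ))⁻¹‖ ≤ (T * δ)⁻¹ := by
      have h1 : ‖(2*Complex.I*(t:ℂ)*(δ:ℂ))⁻¹‖ = (2*T*δ)⁻¹ := by
        rw [norm_inv]
        congr 1
        rw [norm_mul, norm_mul, norm_mul]
        simp [abs_of_pos hδ, hTdef]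
      rw [h1]
      apply inv_anti₀ (by positivity)
      nlinarith
    have hbound : ∀ j ∈ Finset.range (k+1),
        ‖G f t j δ‖ * ‖(2*Complex.I*(t:ℂ)*(δ:ℂ))⁻¹‖ ≤ Dsum j * M * X := by
      intro j hj
      have hjk : j ≤ k := Nat.lt_succ_iff.mp (Finset.mem_range.mp hj)
      have hGb := G_bound α M f t ht j
        (fun i hi x hx => hder i (by omega) x hx) δ hδ
      have hfold : (∑ i ∈ Finset.range (j+1), |cc j i|) = Dsum j := rfl
      calc ‖G f t j δ‖ * ‖(2*Complex.I*(t:ℂ)*(δ:ℂ))⁻¹‖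
          ≤ ((∑ i ∈ Finset.range (j+1), |cc j i|) * M * T^(-(j:ℝ)) * δ^(α - 2*(j:ℝ))) *
            ((T*δ)⁻¹) := by
            apply mul_le_mul hGb hinv (norm_nonneg _)
            have : (0:ℝ) ≤ ∑ i ∈ Finset.range (j+1), |cc j i| :=
              Finset.sum_nonneg fun i _ => abs_nonneg _
            have h1 : (0:ℝ) ≤ T^(-(j:ℝ)) := (Real.rpow_pos_of_pos hT _).le
            have h2 : (0:ℝ) ≤ δ^(α - 2*(j:ℝ)) := (Real.rpow_pos_of_pos hδ _).le
            positivity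
        _ = Dsum j * M * (T^(-(j:ℝ)) * δ^(α - 2*(j:ℝ)) * (T*δ)⁻¹) := by rw [hfold]; ring
        _ = Dsum j * M * X := by rw [hbd j]
    -- tail bound
    set p : ℝ := α - 2*(k:ℝ) - 2 with hp
    have hplt : p < -1 := by rw [hp]; linarith
    have hGcont : ContinuousOn (G f t (k+1)) (Set.Ioi 0) := G_continuousOn k f hf t (k+1) le_rfl
    have hsub : Set.uIcc δ b ⊆ Set.Ioi 0 := by
      rw [Set.uIcc_of_le hδb]; intro x hx; exact lt_of_lt_of_le hδ hx.1
    have hconst : ∀ x ∈ Set.Icc δ b, ‖E x * G f t (k+1) x‖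
        ≤ Dsum (k+1) * M * T^(-((k:ℝ)+1)) * x ^ p := by
      intro x hx
      have hx0 : 0 < x := lt_of_lt_of_le hδ hx.1
      have hGb2 := G_bound α M f t ht (k+1) (fun i hi y hy => hder i hi y hy) x hx0
      push_cast at hGb2
      rw [hE]
      rw [norm_mul, expE_norm, one_mul]
      refine le_trans hGb2 (le_of_eq ?_)
      rw [show α - 2*((k:ℝ)+1) = p from by rw [hp]; ring]
    have hInt1 : IntervalIntegrable (fun x => ‖E x * G f t (k+1) x‖) volume δ b :=
      (((expE_continuous t).continuousOn.mul (hGcont.mono hsub)).norm).intervalIntegrable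
    have hInt2 : IntervalIntegrable (fun x => Dsum (k+1) * M * T^(-((k:ℝ)+1)) * x ^ p)
        volume δ b := by
      apply ContinuousOn.intervalIntegrable
      apply ContinuousOn.mul continuousOn_const
      intro x hx
      exact (Real.continuousAt_rpow_const x p (Or.inl (ne_of_gt (hsub hx)))).continuousWithinAt
    have h1 := intervalIntegral.norm_integral_le_integral_norm
      (f := fun x => E x * G f t (k+1) x) (μ := volume) hδb
    have h2 := intervalIntegral.integral_mono_on hδb hInt1 hInt2 hconst
    have h3 : ∫ x in δ..b, Dsum (k+1) * M * T^(-((k:ℝ)+1)) * x ^ p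
        = Dsum (k+1) * M * T^(-((k:ℝ)+1)) * ∫ x in δ..b, x ^ p :=
      intervalIntegral.integral_const_mul _ _
    have h4 : ∫ x in δ..b, x ^ p ≤ δ ^ (p+1) / (2*(k:ℝ)+1-α) := by
      rw [intervalIntegral.integral_of_le hδb]
      have h6 : ∫ x in Set.Ioc δ b, x ^ p ≤ ∫ x in Set.Ioi δ, x ^ p := by
        apply setIntegral_mono_set (integrableOn_Ioi_rpow_of_lt hplt hδ)
        · filter_upwards [ae_restrict_mem measurableSet_Ioi] with x hx
          exact Real.rpow_nonneg (le_of_lt (lt_trans hδ hx)) p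
        · exact HasSubset.Subset.eventuallyLE Set.Ioc_subset_Ioi_self
      have h7 : ∫ x in Set.Ioi δ, x ^ p = -δ^(p+1)/(p+1) := integral_Ioi_rpow_of_lt hplt hδ
      have h8 : -δ^(p+1)/(p+1) = δ^(p+1)/(2*(k:ℝ)+1-α) := by
        have hq : 2*(k:ℝ)+1-α = -(p+1) := by rw [hp]; ring
        rw [hq, div_neg, ← neg_div]
      exact h6.trans (le_of_eq (h7.trans h8))
    have hXp : T^(-((k:ℝ)+1)) * δ^(p+1) = X := by
      rw [hTd, ← Real.rpow_add hT, hXdef]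
      congr 1
      rw [hp]; ring
    have htail : ‖∫ x in δ..b, E x * G f t (k+1) x‖
        ≤ Dsum (k+1) * M * X / (2*(k:ℝ)+1-α) := by
      have hcn : 0 ≤ Dsum (k+1) * M * T^(-((k:ℝ)+1)) :=
        mul_nonneg (mul_nonneg (hDnonneg _) hM) (Real.rpow_pos_of_pos hT _).le
      calc ‖∫ x in δ..b, E x * G f t (k+1) x‖
          ≤ ∫ x in δ..b, ‖E x * G f t (k+1) x‖ := h1
        _ ≤ ∫ x in δ..b, Dsum (k+1) * M * T^(-((k:ℝ)+1)) * x ^ p := h2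
        _ = Dsum (k+1) * M * T^(-((k:ℝ)+1)) * ∫ x in δ..b, x ^ p := h3
        _ ≤ Dsum (k+1) * M * T^(-((k:ℝ)+1)) * (δ^(p+1) / (2*(k:ℝ)+1-α)) :=
            mul_le_mul_of_nonneg_left h4 hcn
        _ = Dsum (k+1) * M * X / (2*(k:ℝ)+1-α) := by rw [← hXp]; ring
    -- combine everything
    have hsum : ∑ j ∈ Finset.range (k+1), ‖G f t j δ‖ * ‖(2*Complex.I*(t:ℂ)*(δ:ℂ))⁻¹‖
        ≤ (∑ j ∈ Finset.range (k+1), Dsum j) * M * X := by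
      refine le_trans (Finset.sum_le_sum hbound) ?_
      rw [← Finset.sum_mul, ← Finset.sum_mul]
    refine le_trans (norm_add_le _ _) ?_
    have hfar := le_trans hiter (by linarith [add_le_add hsum htail] :
      (∑ j ∈ Finset.range (k+1), ‖G f t j δ‖ * ‖(2*Complex.I*(t:ℂ)*(δ:ℂ))⁻¹‖)
        + ‖∫ x in δ..b, E x * G f t (k+1) x‖
      ≤ (∑ j ∈ Finset.range (k+1), Dsum j) * M * X + Dsum (k+1) * M * X / (2*(k:ℝ)+1-α))
    have hMX : 0 ≤ M * X := mul_nonneg hM hX.le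
    have hfinal : 1/(α+1) * M * X + ((∑ j ∈ Finset.range (k+1), Dsum j) * M * X
        + Dsum (k+1) * M * X / (2*(k:ℝ)+1-α)) ≤ C * M * X := by
      calc 1/(α+1) * M * X + ((∑ j ∈ Finset.range (k+1), Dsum j) * M * X
          + Dsum (k+1) * M * X / (2*(k:ℝ)+1-α))
          = (1/(α+1) + (∑ j ∈ Finset.range (k+1), Dsum j)
            + Dsum (k+1) / (2*(k:ℝ)+1-α)) * (M * X) := by ring
        _ ≤ (1/(α+1) + (∑ j ∈ Finset.range (k+1), Dsum j)
            + Dsum (k+1) / (2*(k:ℝ)+1-α) + 1) * (M * X) := by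
            apply mul_le_mul_of_nonneg_right (by linarith) hMX
        _ = C * M * X := by rw [hC]; ring
    refine le_trans (add_le_add hnear2 hfar) hfinal
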